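/- Generation lemma for record merge: let σ be a type with ω ≰ σ (equivalently, σ is not equal to ω up to mutual subtyping). Then Γ ⊢ M ⊕ R : σ is derivable if and only if there exist record types ρ₁, ρ₂ ∈ 𝕋_R such that Γ ⊢ M : ρ₁ and Γ ⊢ R : ρ₂ are derivable, lbl(R) = lbl(ρ₂), and ρ₁+ρ₂ ≤ σ. -/

import Mathlib

/-- Terms of the record calculus `Λ_R`, with de Bruijn indices for bound variables
(so that terms are identified up to α-conversion) and labels drawn from `ℕ`.
Records are finite lists of label/term pairs; in `merge M fs` the right operand
is syntactically a record. -/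
inductive Tm where
  | var : Nat → Tm
  | lam : Tm → Tm
  | app : Tm → Tm → Tm
  | sel : Tm → Nat → Tm
  | rcd : List (Nat × Tm) → Tm
  | merge : Tm → List (Nat × Tm) → Tm

namespace Tm

/-- The list of field labels of a record. -/
def keys (fs : List (Nat × Tm)) : List Nat := fs.map Prod.fst

/-- The set of field labels `lbl(R)` of a record. -/
def lblR (fs : List (Nat × Tm)) : Finset Nat := (keys fs).toFinset

/-- Record merge on field lists: fields of the first record whose label does not
occur in the second record, followed by all fields of the second record. -/
def mergeFields (fs gs : List (Nat × Tm)) : List (Nat × Tm) :=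
  fs.filter (fun p => decide (p.1 ∉ keys gs)) ++ gs

end Tm
/-- Intersection and record types `𝕋`. Record types are the types satisfying `IsRec`. -/
inductive Ty where
  | const : Nat → Ty
  | omega : Ty
  | arrow : Ty → Ty → Ty
  | inter : Ty → Ty → Ty
  | empty : Ty
  | fld : Nat → Ty → Ty
  | merge : Ty → Ty → Ty
deriving DecidableEq

/-- The record types `𝕋_R ⊆ 𝕋`. -/
inductive IsRec : Ty → Prop where
  | empty : IsRec .empty
  | fld (l : Nat) (σ : Ty) : IsRec (.fld l σ)
  | merge {ρ₁ ρ₂ : Ty} : IsRec ρ₁ → IsRec ρ₂ → IsRec (.merge ρ₁ ρ₂)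
  | inter {ρ₁ ρ₂ : Ty} : IsRec ρ₁ → IsRec ρ₂ → IsRec (.inter ρ₁ ρ₂)

/-- Subtyping on `𝕋`: the least preorder satisfying the BCD axioms together with
the record and record-merge axioms. -/
inductive TySub : Ty → Ty → Prop where
  | refl (σ : Ty) : TySub σ σ
  | trans {σ τ υ : Ty} : TySub σ τ → TySub τ υ → TySub σ υ
  | le_omega (σ : Ty) : TySub σ .omega
  | omega_arrow : TySub .omega (.arrow .omega .omega)
  | inter_left (σ τ : Ty) : TySub (.inter σ τ) σ
  | inter_right (σ τ : Ty) : TySub (.inter σ τ) τ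
  | le_inter {σ τ₁ τ₂ : Ty} : TySub σ τ₁ → TySub σ τ₂ → TySub σ (.inter τ₁ τ₂)
  | arrow_inter (σ τ₁ τ₂ : Ty) :
      TySub (.inter (.arrow σ τ₁) (.arrow σ τ₂)) (.arrow σ (.inter τ₁ τ₂))
  | arrow_mono {σ₁ σ₂ τ₁ τ₂ : Ty} : TySub σ₂ σ₁ → TySub τ₁ τ₂ →
      TySub (.arrow σ₁ τ₁) (.arrow σ₂ τ₂)
  | fld_empty (l : Nat) (σ : Ty) : TySub (.fld l σ) .empty
  | fld_inter (l : Nat) (σ τ : Ty) :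
      TySub (.inter (.fld l σ) (.fld l τ)) (.fld l (.inter σ τ))
  | fld_mono {σ τ : Ty} (l : Nat) : TySub σ τ → TySub (.fld l σ) (.fld l τ)
  | merge_empty_r {ρ : Ty} : IsRec ρ → TySub (.merge ρ .empty) ρ
  | merge_empty_r' {ρ : Ty} : IsRec ρ → TySub ρ (.merge ρ .empty)
  | merge_empty_l {ρ : Ty} : IsRec ρ → TySub (.merge .empty ρ) ρ
  | merge_empty_l' {ρ : Ty} : IsRec ρ → TySub ρ (.merge .empty ρ)
  | merge_assoc {ρ₁ ρ₂ ρ₃ : Ty} : IsRec ρ₁ → IsRec ρ₂ → IsRec ρ₃ →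
      TySub (.merge (.merge ρ₁ ρ₂) ρ₃) (.merge ρ₁ (.merge ρ₂ ρ₃))
  | merge_assoc' {ρ₁ ρ₂ ρ₃ : Ty} : IsRec ρ₁ → IsRec ρ₂ → IsRec ρ₃ →
      TySub (.merge ρ₁ (.merge ρ₂ ρ₃)) (.merge (.merge ρ₁ ρ₂) ρ₃)
  | merge_inter {ρ₁ ρ₂ ρ₃ : Ty} : IsRec ρ₁ → IsRec ρ₂ → IsRec ρ₃ →
      TySub (.merge (.inter ρ₁ ρ₂) ρ₃) (.inter (.merge ρ₁ ρ₃) (.merge ρ₂ ρ₃))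
  | merge_inter' {ρ₁ ρ₂ ρ₃ : Ty} : IsRec ρ₁ → IsRec ρ₂ → IsRec ρ₃ →
      TySub (.inter (.merge ρ₁ ρ₃) (.merge ρ₂ ρ₃)) (.merge (.inter ρ₁ ρ₂) ρ₃)
  | fld_absorb {ρ : Ty} (l : Nat) (σ τ : Ty) : IsRec ρ →
      TySub (.merge (.fld l σ) (.inter (.fld l τ) ρ)) (.inter (.fld l τ) ρ)
  | fld_absorb' {ρ : Ty} (l : Nat) (σ τ : Ty) : IsRec ρ →
      TySub (.inter (.fld l τ) ρ) (.merge (.fld l σ) (.inter (.fld l τ) ρ))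
  | fld_comm {ρ : Ty} {l l' : Nat} (σ τ : Ty) : l ≠ l' → IsRec ρ →
      TySub (.merge (.fld l σ) (.inter (.fld l' τ) ρ))
          (.inter (.fld l' τ) (.merge (.fld l σ) ρ))
  | fld_comm' {ρ : Ty} {l l' : Nat} (σ τ : Ty) : l ≠ l' → IsRec ρ →
      TySub (.inter (.fld l' τ) (.merge (.fld l σ) ρ))
          (.merge (.fld l σ) (.inter (.fld l' τ) ρ))
  | merge_mono_l {ρ₁ ρ₂ ρ : Ty} : IsRec ρ₁ → IsRec ρ₂ → IsRec ρ →
      TySub ρ₁ ρ₂ → TySub (.merge ρ₁ ρ) (.merge ρ₂ ρ)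
  | merge_congr_r {ρ ρ₁ ρ₂ : Ty} : IsRec ρ → IsRec ρ₁ → IsRec ρ₂ →
      TySub ρ₁ ρ₂ → TySub ρ₂ ρ₁ → TySub (.merge ρ ρ₁) (.merge ρ ρ₂)

/-- Type equality: mutual subtyping. -/
def TyEq (σ τ : Ty) : Prop := TySub σ τ ∧ TySub τ σ
/-- The label map on record types. -/
def lbl : Ty → Finset Nat
  | .const _ => ∅
  | .omega => ∅
  | .arrow _ _ => ∅
  | .empty => ∅
  | .fld l _ => {l}
  | .inter ρ₁ ρ₂ => lbl ρ₁ ∪ lbl ρ₂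
  | .merge ρ₁ ρ₂ => lbl ρ₁ ∪ lbl ρ₂
/-- The type assignment system for `Λ_R`. With de Bruijn indices, a basis `Γ` is a
list of types, extension `Γ, x:σ` is `σ :: Γ`, and the axiom rule looks up the
type of a variable index in `Γ`. -/
inductive Typing : List Ty → Tm → Ty → Prop where
  | var {Γ : List Ty} {x : Nat} {σ : Ty} :
      Γ[x]? = some σ → Typing Γ (.var x) σ
  | lam {Γ : List Ty} {M : Tm} {σ τ : Ty} :
      Typing (σ :: Γ) M τ → Typing Γ (.lam M) (.arrow σ τ)
  | app {Γ : List Ty} {M N : Tm} {σ τ : Ty} :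
      Typing Γ M (.arrow σ τ) → Typing Γ N σ → Typing Γ (.app M N) τ
  | inter {Γ : List Ty} {M : Tm} {σ τ : Ty} :
      Typing Γ M σ → Typing Γ M τ → Typing Γ M (.inter σ τ)
  | omega {Γ : List Ty} (M : Tm) : Typing Γ M .omega
  | sub {Γ : List Ty} {M : Tm} {σ τ : Ty} :
      Typing Γ M σ → TySub σ τ → Typing Γ M τ
  | empty {Γ : List Ty} (fs : List (Nat × Tm)) : Typing Γ (.rcd fs) .empty
  | rcd {Γ : List Ty} {fs : List (Nat × Tm)} {l : Nat} {M : Tm} {σ : Ty} :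
      List.lookup l fs = some M → Typing Γ M σ → Typing Γ (.rcd fs) (.fld l σ)
  | sel {Γ : List Ty} {M : Tm} {l : Nat} {σ : Ty} :
      Typing Γ M (.fld l σ) → Typing Γ (.sel M l) σ
  | merge {Γ : List Ty} {M : Tm} {fs : List (Nat × Tm)} {ρ₁ ρ₂ : Ty} :
      Typing Γ M ρ₁ → Typing Γ (.rcd fs) ρ₂ → IsRec ρ₁ → IsRec ρ₂ →
      Tm.lblR fs = lbl ρ₂ → Typing Γ (.merge M fs) (.merge ρ₁ ρ₂)

namespace MergeGen

/-- Normal form: a record type as a list of fields; `toTy` interprets it as an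
intersection of field atoms (ending in `⟨⟩`). -/
def toTy : List (Nat × Ty) → Ty
  | [] => .empty
  | p :: t => .inter (.fld p.1 p.2) (toTy t)

def keysT (nf : List (Nat × Ty)) : List Nat := nf.map Prod.fst

def mergeNF (fs gs : List (Nat × Ty)) : List (Nat × Ty) :=
  fs.filter (fun p => decide (p.1 ∉ keysT gs)) ++ gs

theorem isRec_toTy (nf : List (Nat × Ty)) : IsRec (toTy nf) := by
  induction nf with
  | nil => exact .empty
  | cons p t ih => exact .inter (.fld p.1 p.2) ih

theorem lbl_toTy (nf : List (Nat × Ty)) : lbl (toTy nf) = (keysT nf).toFinset := by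
  induction nf with
  | nil => simp [toTy, keysT, lbl]
  | cons p t ih => simp [toTy, keysT, lbl, ih, Finset.insert_eq, keysT, -Finset.singleton_union]

theorem _root_.TyEq.rfl' (σ : Ty) : TyEq σ σ := ⟨.refl σ, .refl σ⟩

theorem _root_.TyEq.symm' {a b : Ty} (h : TyEq a b) : TyEq b a := ⟨h.2, h.1⟩

theorem _root_.TyEq.trans' {a b c : Ty} (h : TyEq a b) (h' : TyEq b c) : TyEq a c :=
  ⟨h.1.trans h'.1, h'.2.trans h.2⟩

theorem inter_mono {a a' b b' : Ty} (h : TySub a a') (h' : TySub b b') :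
    TySub (.inter a b) (.inter a' b') :=
  .le_inter ((TySub.inter_left a b).trans h) ((TySub.inter_right a b).trans h')

theorem interEq {a a' b b' : Ty} (h : TyEq a a') (h' : TyEq b b') :
    TyEq (.inter a b) (.inter a' b') :=
  ⟨inter_mono h.1 h'.1, inter_mono h.2 h'.2⟩

theorem mergeEq {a a' b b' : Ty} (ra : IsRec a) (ra' : IsRec a') (rb : IsRec b)
    (rb' : IsRec b') (h : TyEq a a') (h' : TyEq b b') :
    TyEq (.merge a b) (.merge a' b') := by
  constructor
  · exact (TySub.merge_mono_l ra ra' rb h.1).trans (.merge_congr_r ra' rb rb' h'.1 h'.2)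
  · exact (TySub.merge_mono_l ra' ra rb' h.2).trans (.merge_congr_r ra rb' rb h'.2 h'.1)

theorem inter_absorb {a b : Ty} (h : TySub b a) : TyEq (.inter a b) b :=
  ⟨.inter_right a b, .le_inter h (.refl b)⟩

theorem inter_swap (a b c : Ty) : TyEq (.inter a (.inter b c)) (.inter b (.inter a c)) := by
  constructor <;>
    exact .le_inter ((TySub.inter_right _ _).trans (.inter_left _ _))
      (.le_inter (.inter_left _ _) ((TySub.inter_right _ _).trans (.inter_right _ _)))

theorem toTy_le_empty (nf : List (Nat × Ty)) : TySub (toTy nf) .empty := by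
  induction nf with
  | nil => exact .refl _
  | cons p t ih => exact (TySub.inter_left _ _).trans (.fld_empty p.1 p.2)

theorem toTy_append_le_right (a b : List (Nat × Ty)) : TySub (toTy (a ++ b)) (toTy b) := by
  induction a with
  | nil => exact .refl _
  | cons p t ih => exact (TySub.inter_right _ _).trans ih

theorem toTy_append_le_left (a b : List (Nat × Ty)) : TySub (toTy (a ++ b)) (toTy a) := by
  induction a with
  | nil => exact toTy_le_empty b
  | cons p t ih => exact inter_mono (.refl _) ih

theorem toTy_append (a b : List (Nat × Ty)) :
    TyEq (toTy (a ++ b)) (.inter (toTy a) (toTy b)) := by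
  refine ⟨.le_inter (toTy_append_le_left a b) (toTy_append_le_right a b), ?_⟩
  induction a with
  | nil => exact .inter_right _ _
  | cons p t ih =>
      refine .le_inter ((TySub.inter_left _ _).trans (.inter_left _ _)) ?_
      exact (inter_mono (TySub.inter_right _ _) (.refl _)).trans ih

theorem merge_fld_mem (l : Nat) (σ : Ty) (g : List (Nat × Ty)) (h : l ∈ keysT g) :
    TyEq (.merge (.fld l σ) (toTy g)) (toTy g) := by
  induction g with
  | nil => simp [keysT] at h
  | cons p t ih =>
      rcases eq_or_ne l p.1 with he | hne
      · subst he
        exact ⟨.fld_absorb p.1 σ p.2 (isRec_toTy t), .fld_absorb' p.1 σ p.2 (isRec_toTy t)⟩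
      · have hm : l ∈ keysT t := by
          simp [keysT] at h ⊢; tauto
        refine TyEq.trans' ⟨TySub.fld_comm σ p.2 hne (isRec_toTy t),
          TySub.fld_comm' σ p.2 hne (isRec_toTy t)⟩ ?_
        exact interEq (TyEq.rfl' _) (ih hm)

theorem merge_fld_not_mem (l : Nat) (σ : Ty) (g : List (Nat × Ty)) (h : l ∉ keysT g) :
    TyEq (.merge (.fld l σ) (toTy g)) (.inter (.fld l σ) (toTy g)) := by
  induction g with
  | nil =>
      refine TyEq.trans' ⟨TySub.merge_empty_r (.fld l σ), TySub.merge_empty_r' (.fld l σ)⟩ ?_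
      exact ⟨.le_inter (.refl _) (.fld_empty l σ), .inter_left _ _⟩
  | cons p t ih =>
      have hne : l ≠ p.1 := by simp [keysT] at h; tauto
      have hm : l ∉ keysT t := by simp [keysT] at h ⊢; tauto
      refine TyEq.trans' ⟨TySub.fld_comm σ p.2 hne (isRec_toTy t),
        TySub.fld_comm' σ p.2 hne (isRec_toTy t)⟩ ?_
      exact (interEq (TyEq.rfl' _) (ih hm)).trans' (inter_swap _ _ _)

theorem mergeNF_correct (f g : List (Nat × Ty)) :
    TyEq (.merge (toTy f) (toTy g)) (toTy (mergeNF f g)) := by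
  induction f with
  | nil =>
      simp only [mergeNF, List.filter_nil, List.nil_append]
      exact ⟨.merge_empty_l (isRec_toTy g), .merge_empty_l' (isRec_toTy g)⟩
  | cons p t ih =>
      have step : TyEq (.merge (toTy (p :: t)) (toTy g))
          (.inter (.merge (.fld p.1 p.2) (toTy g)) (.merge (toTy t) (toTy g))) :=
        ⟨.merge_inter (.fld p.1 p.2) (isRec_toTy t) (isRec_toTy g),
         .merge_inter' (.fld p.1 p.2) (isRec_toTy t) (isRec_toTy g)⟩
      by_cases hm : p.1 ∈ keysT g
      · have : mergeNF (p :: t) g = mergeNF t g := by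
          simp [mergeNF, List.filter_cons, hm]
        rw [this]
        refine (step.trans' (interEq (merge_fld_mem p.1 p.2 g hm) ih)).trans' ?_
        exact inter_absorb (toTy_append_le_right _ _)
      · have : mergeNF (p :: t) g = p :: mergeNF t g := by
          simp [mergeNF, List.filter_cons, hm]
        rw [this]
        refine (step.trans' (interEq (merge_fld_not_mem p.1 p.2 g hm) ih)).trans' ?_
        have hMg : TySub (toTy (mergeNF t g)) (toTy g) := toTy_append_le_right _ _
        constructor
        · exact .le_inter ((TySub.inter_left _ _).trans (.inter_left _ _)) (.inter_right _ _)
        · exact .le_inter (.le_inter (.inter_left _ _) ((TySub.inter_right _ _).trans hMg))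
            (.inter_right _ _)

theorem keysT_mergeNF (f g : List (Nat × Ty)) :
    (keysT (mergeNF f g)).toFinset = (keysT f).toFinset ∪ (keysT g).toFinset := by
  ext l
  simp only [mergeNF, keysT, List.map_append, List.toFinset_append, Finset.mem_union,
    List.mem_toFinset, List.mem_map, List.mem_filter]
  constructor
  · rintro (⟨p, ⟨hp, _⟩, rfl⟩ | h)
    · exact Or.inl ⟨p, hp, rfl⟩
    · exact Or.inr h
  · rintro (⟨p, hp, rfl⟩ | h)
    · by_cases hm : p.1 ∈ keysT g
      · simp only [keysT, List.mem_map] at hm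
        exact Or.inr hm
      · refine Or.inl ⟨p, ⟨hp, ?_⟩, rfl⟩
        simp only [decide_eq_true_eq]
        simpa [keysT, List.mem_map] using hm
    · exact Or.inr h

theorem normalize {ρ : Ty} (h : IsRec ρ) :
    ∃ nf : List (Nat × Ty), TyEq ρ (toTy nf) ∧ lbl ρ = (keysT nf).toFinset := by
  induction h with
  | empty => exact ⟨[], TyEq.rfl' _, by simp [keysT, lbl]⟩
  | fld l σ =>
      refine ⟨[(l, σ)], ⟨.le_inter (.refl _) (.fld_empty l σ), .inter_left _ _⟩, ?_⟩
      simp [keysT, lbl, toTy]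
  | @inter ρ₁ ρ₂ h1 h2 ih1 ih2 =>
      obtain ⟨a, ha, hal⟩ := ih1
      obtain ⟨b, hb, hbl⟩ := ih2
      refine ⟨a ++ b, (interEq ha hb).trans' (toTy_append a b).symm', ?_⟩
      simp [lbl, hal, hbl, keysT]
  | @merge ρ₁ ρ₂ h1 h2 ih1 ih2 =>
      obtain ⟨a, ha, hal⟩ := ih1
      obtain ⟨b, hb, hbl⟩ := ih2
      refine ⟨mergeNF a b,
        (mergeEq h1 (isRec_toTy a) h2 (isRec_toTy b) ha hb).trans' (mergeNF_correct a b), ?_⟩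
      rw [keysT_mergeNF]
      simp [lbl, hal, hbl]

theorem key_lemma {ρ₁ ρ₂ ρ₂' : Ty} (r1 : IsRec ρ₁) (r2 : IsRec ρ₂) (r2' : IsRec ρ₂')
    (hl : lbl ρ₂ = lbl ρ₂') :
    TySub (.merge ρ₁ (.inter ρ₂ ρ₂')) (.merge ρ₁ ρ₂) := by
  obtain ⟨f, hf, hfl⟩ := normalize r1
  obtain ⟨g, hg, hgl⟩ := normalize r2
  obtain ⟨g', hg', hgl'⟩ := normalize r2'
  have e2 : TyEq (.inter ρ₂ ρ₂') (toTy (g ++ g')) :=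
    (interEq hg hg').trans' (toTy_append g g').symm'
  have eL : TyEq (.merge ρ₁ (.inter ρ₂ ρ₂')) (toTy (mergeNF f (g ++ g'))) :=
    (mergeEq r1 (isRec_toTy f) (.inter r2 r2') (isRec_toTy (g ++ g')) hf e2).trans'
      (mergeNF_correct f (g ++ g'))
  have eR : TyEq (.merge ρ₁ ρ₂) (toTy (mergeNF f g)) :=
    (mergeEq r1 (isRec_toTy f) r2 (isRec_toTy g) hf hg).trans' (mergeNF_correct f g)
  have hkeys : (keysT g').toFinset = (keysT g).toFinset := by rw [← hgl, ← hgl', hl]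
  have hfil : f.filter (fun p => decide (p.1 ∉ keysT (g ++ g')))
      = f.filter (fun p => decide (p.1 ∉ keysT g)) := by
    apply List.filter_congr
    intro p _
    have hiff : p.1 ∈ keysT (g ++ g') ↔ p.1 ∈ keysT g := by
      have h' : p.1 ∈ keysT g' ↔ p.1 ∈ keysT g := by
        rw [← List.mem_toFinset, ← List.mem_toFinset (l := keysT g), hkeys]
      have : keysT (g ++ g') = keysT g ++ keysT g' := List.map_append
      rw [this, List.mem_append, h', or_self]
    simp [hiff]
  have hsub : TySub (toTy (mergeNF f (g ++ g'))) (toTy (mergeNF f g)) := by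
    unfold mergeNF
    rw [hfil, ← List.append_assoc]
    exact toTy_append_le_left _ _
  exact eL.1.trans (hsub.trans eR.2)

theorem gen_aux {Γ : List Ty} {t : Tm} {σ : Ty} (h : Typing Γ t σ) :
    ∀ M R, t = .merge M R →
      TySub .omega σ ∨ ∃ ρ₁ ρ₂ : Ty, IsRec ρ₁ ∧ IsRec ρ₂ ∧ Typing Γ M ρ₁ ∧
        Typing Γ (.rcd R) ρ₂ ∧ Tm.lblR R = lbl ρ₂ ∧ TySub (.merge ρ₁ ρ₂) σ := by
  induction h with
  | var _ => intro M R h; simp at h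
  | lam _ _ => intro M R h; simp at h
  | app _ _ _ _ => intro M R h; simp at h
  | empty _ => intro M R h; simp at h
  | rcd _ _ _ => intro M R h; simp at h
  | sel _ _ => intro M R h; simp at h
  | omega _ => intro M R h; exact Or.inl (.refl _)
  | sub _ hst ih =>
      intro M R heq
      rcases ih M R heq with hω | ⟨ρ₁, ρ₂, r1, r2, t1, t2, hl, hs⟩
      · exact Or.inl (hω.trans hst)
      · exact Or.inr ⟨ρ₁, ρ₂, r1, r2, t1, t2, hl, hs.trans hst⟩
  | merge t1 t2 r1 r2 hl _ _ =>
      intro M R heq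
      injection heq with h1 h2
      subst h1; subst h2
      exact Or.inr ⟨_, _, r1, r2, t1, t2, hl, .refl _⟩
  | inter _ _ ih1 ih2 =>
      intro M R heq
      rcases ih1 M R heq with hω1 | ⟨ρ₁, ρ₂, r1, r2, t1, t2, hl, hs⟩
      · rcases ih2 M R heq with hω2 | ⟨ρ₁', ρ₂', r1', r2', t1', t2', hl', hs'⟩
        · exact Or.inl (.le_inter hω1 hω2)
        · exact Or.inr ⟨ρ₁', ρ₂', r1', r2', t1', t2', hl',
            .le_inter ((TySub.le_omega _).trans hω1) hs'⟩
      · rcases ih2 M R heq with hω2 | ⟨ρ₁', ρ₂', r1', r2', t1', t2', hl', hs'⟩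
        · exact Or.inr ⟨ρ₁, ρ₂, r1, r2, t1, t2, hl,
            .le_inter hs ((TySub.le_omega _).trans hω2)⟩
        · refine Or.inr ⟨.inter ρ₁ ρ₁', .inter ρ₂ ρ₂', .inter r1 r1', .inter r2 r2',
            .inter t1 t1', .inter t2 t2', ?_, ?_⟩
          · simp [lbl, ← hl, ← hl']
          · have step : TySub (Ty.merge (.inter ρ₁ ρ₁') (.inter ρ₂ ρ₂'))
                (.inter (Ty.merge ρ₁ (.inter ρ₂ ρ₂')) (Ty.merge ρ₁' (.inter ρ₂ ρ₂'))) :=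
              .merge_inter r1 r1' (.inter r2 r2')
            have hlbl : lbl ρ₂ = lbl ρ₂' := by rw [← hl, ← hl']
            have k1 : TySub (Ty.merge ρ₁ (.inter ρ₂ ρ₂')) (.merge ρ₁ ρ₂) :=
              key_lemma r1 r2 r2' hlbl
            have k2 : TySub (Ty.merge ρ₁' (.inter ρ₂ ρ₂')) (.merge ρ₁' ρ₂') := by
              have sw : TySub (Ty.merge ρ₁' (.inter ρ₂ ρ₂')) (Ty.merge ρ₁' (.inter ρ₂' ρ₂)) :=
                .merge_congr_r r1' (.inter r2 r2') (.inter r2' r2)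
                  (.le_inter (.inter_right _ _) (.inter_left _ _))
                  (.le_inter (.inter_right _ _) (.inter_left _ _))
              exact sw.trans (key_lemma r1' r2' r2 hlbl.symm)
            exact .le_inter
              ((step.trans ((TySub.inter_left _ _).trans k1)).trans hs)
              ((step.trans ((TySub.inter_right _ _).trans k2)).trans hs')

end MergeGen

/-- Generation lemma for record merge (for `σ` with `ω ≰ σ`). -/
theorem merge_generation (Γ : List Ty) (M : Tm) (R : List (Nat × Tm)) (σ : Ty)
    (hσ : ¬ TySub .omega σ) :
    Typing Γ (.merge M R) σ ↔
      ∃ ρ₁ ρ₂ : Ty, IsRec ρ₁ ∧ IsRec ρ₂ ∧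
        Typing Γ M ρ₁ ∧ Typing Γ (.rcd R) ρ₂ ∧
        Tm.lblR R = lbl ρ₂ ∧ TySub (.merge ρ₁ ρ₂) σ := by
  constructor
  · intro h
    rcases MergeGen.gen_aux h M R rfl with hω | ⟨ρ₁, ρ₂, r1, r2, t1, t2, hl, hs⟩
    · exact absurd hω hσ
    · exact ⟨ρ₁, ρ₂, r1, r2, t1, t2, hl, hs⟩
  · rintro ⟨ρ₁, ρ₂, r1, r2, t1, t2, hl, hs⟩
    exact Typing.sub (Typing.merge t1 t2 r1 r2 hl) hs
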